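/- Let K_e = {(x¹,x²,x³) ∈ ℝ³ : (x³)² = (x¹)²/a² + (x²)²/b², x³ > 0} with a > b > 0. Let l be an oriented line intersecting K_e at two distinct points p₁ and p₂, with unit direction v = (p₂ − p₁)/‖p₂ − p₁‖, and let m_{i,j}, I₁, I₂ be computed from any point of l and v. If I₁ = c₁ > 0 and I₂ = c₂ > 0, then the angle ∠p₁Op₂ at the origin O satisfies ∠p₁Op₂ > arcsin( 2ab√(c₁c₂) / (a²(b²+1)c₁ + (b²+1)c₂) ). -/

import Mathlib

open Real
open scoped RealInnerProductSpace

noncomputable section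

/-- The elliptic cone `(x³)² = (x¹)²/a² + (x²)²/b²`, `x³ > 0`. -/
def Ke (a b : ℝ) : Set (EuclideanSpace ℝ (Fin 3)) :=
  {x | (x 2) ^ 2 = (x 0) ^ 2 / a ^ 2 + (x 1) ^ 2 / b ^ 2 ∧ 0 < x 2}

def m12 (x v : EuclideanSpace ℝ (Fin 3)) : ℝ := x 0 * v 1 - x 1 * v 0
def m13 (x v : EuclideanSpace ℝ (Fin 3)) : ℝ := x 0 * v 2 - x 2 * v 0
def m23 (x v : EuclideanSpace ℝ (Fin 3)) : ℝ := x 1 * v 2 - x 2 * v 1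

def I1 (x v : EuclideanSpace ℝ (Fin 3)) : ℝ := m12 x v ^ 2 + m13 x v ^ 2 + m23 x v ^ 2

def I2 (a b : ℝ) (x v : EuclideanSpace ℝ (Fin 3)) : ℝ :=
  a ^ 2 * m23 x v ^ 2 + b ^ 2 * m13 x v ^ 2 - m12 x v ^ 2

set_option maxHeartbeats 1600000

private lemma starIneq' (a b α₁ β₁ α₂ β₂ : ℝ) (hab : b < a) (hb : 0 < b)
    (h1 : α₁^2 + β₁^2 = 1) (h2 : α₂^2 + β₂^2 = 1)
    (hu : 0 < 1 - (α₁*α₂ + β₁*β₂)) :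
    b^2*(1 - (α₁*α₂ + β₁*β₂))*(2 + a^2*(α₁^2+α₂^2) + b^2*(β₁^2+β₂^2))
      < (b^2+1)*(a^2*(α₁-α₂)^2 + b^2*(β₁-β₂)^2 + a^2*b^2*(α₁*β₂-α₂*β₁)^2
        + b^2*(1 - (α₁*α₂+β₁*β₂))^2) := by
  have hdecomp : 2*((b^2+1)*(a^2*(α₁-α₂)^2 + b^2*(β₁-β₂)^2 + a^2*b^2*(α₁*β₂-α₂*β₁)^2
        + b^2*(1 - (α₁*α₂+β₁*β₂))^2)
      - b^2*(1 - (α₁*α₂ + β₁*β₂))*(2 + a^2*(α₁^2+α₂^2) + b^2*(β₁^2+β₂^2)))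
      = (a^2-b^2)*((α₁-α₂)^2*(2*(b^2+1) - b^2*(1 - (α₁*α₂ + β₁*β₂)))
          + 2*b^4*(α₁*β₂-α₂*β₁)^2 + b^2*(1 - (α₁*α₂ + β₁*β₂))*(β₁+β₂)^2)
        + 2*(b^2+1)*b^2*(b^2*(α₁*β₂-α₂*β₁)^2 + (1 - (α₁*α₂ + β₁*β₂))^2) := by
    linear_combination (2*b^2 + b^4 - 2*b^4*β₂^2 - 2*b^4*α₂^2 + b^4*β₁*β₂ + b^4*α₁*α₂
        - a^2*b^2 + 2*a^2*b^2*β₂^2 + 2*a^2*b^2*α₂^2 + a^2*b^2*β₁*β₂ + a^2*b^2*α₁*α₂) * h1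
      + (2*b^2 - b^4 + b^4*β₁*β₂ + b^4*α₁*α₂ + a^2*b^2 + a^2*b^2*β₁*β₂ + a^2*b^2*α₁*α₂) * h2
  have hE : 0 < a^2 - b^2 := by nlinarith
  have hu2 : 1 - (α₁*α₂ + β₁*β₂) ≤ 2 := by nlinarith [sq_nonneg (α₁+α₂), sq_nonneg (β₁+β₂)]
  have hA : 0 ≤ (a^2-b^2)*((α₁-α₂)^2*(2*(b^2+1) - b^2*(1 - (α₁*α₂ + β₁*β₂)))) :=
    mul_nonneg hE.le (mul_nonneg (sq_nonneg _) (by nlinarith))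
  have hB : 0 ≤ (a^2-b^2)*(2*b^4*(α₁*β₂-α₂*β₁)^2) :=
    mul_nonneg hE.le (by positivity)
  have hC : 0 ≤ (a^2-b^2)*(b^2*(1 - (α₁*α₂ + β₁*β₂))*(β₁+β₂)^2) :=
    mul_nonneg hE.le (mul_nonneg (mul_nonneg (sq_nonneg b) hu.le) (sq_nonneg _))
  have hD : 0 < 2*(b^2+1)*b^2*(b^2*(α₁*β₂-α₂*β₁)^2 + (1 - (α₁*α₂ + β₁*β₂))^2) := by
    have h0 : 0 < b^2*(α₁*β₂-α₂*β₁)^2 + (1 - (α₁*α₂ + β₁*β₂))^2 := by positivity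
    positivity
  linarith [hdecomp, hA, hB, hC, hD]

private lemma sqIneq' (a b α₁ β₁ α₂ β₂ : ℝ) (hab : b < a) (hb : 0 < b)
    (h1 : α₁^2 + β₁^2 = 1) (h2 : α₂^2 + β₂^2 = 1)
    (hu : 0 < 1 - (α₁*α₂ + β₁*β₂)) :
    4*b^4*(1 - (α₁*α₂ + β₁*β₂))^2*((1+a^2*α₁^2+b^2*β₁^2)*(1+a^2*α₂^2+b^2*β₂^2))
      < (b^2+1)^2*(a^2*(α₁-α₂)^2 + b^2*(β₁-β₂)^2 + a^2*b^2*(α₁*β₂-α₂*β₁)^2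
        + b^2*(1 - (α₁*α₂+β₁*β₂))^2)^2 := by
  have star := starIneq' a b α₁ β₁ α₂ β₂ hab hb h1 h2 hu
  have hL : 0 ≤ b^2*(1 - (α₁*α₂ + β₁*β₂))*(2 + a^2*(α₁^2+α₂^2) + b^2*(β₁^2+β₂^2)) := by
    have h0 : (0:ℝ) < 2 + a^2*(α₁^2+α₂^2) + b^2*(β₁^2+β₂^2) := by positivity
    positivity
  have hsq := mul_self_lt_mul_self hL star
  linarith [hsq, sq_nonneg (b^2*(1 - (α₁*α₂ + β₁*β₂))
    *((1+a^2*α₁^2+b^2*β₁^2)-(1+a^2*α₂^2+b^2*β₂^2)))]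

private lemma coordIneq' (a b x0 x1 x2 y0 y1 y2 α₁ β₁ α₂ β₂ : ℝ) (hab : b < a) (hb : 0 < b)
    (hx0 : x0 = a*α₁*x2) (hx1 : x1 = b*β₁*x2) (hy0 : y0 = a*α₂*y2) (hy1 : y1 = b*β₂*y2)
    (h1 : α₁^2 + β₁^2 = 1) (h2 : α₂^2 + β₂^2 = 1) (hx2 : 0 < x2) (hy2 : 0 < y2)
    (hC2 : 0 < a^2*(x1*y2-x2*y1)^2 + b^2*(x0*y2-x2*y0)^2 - (x0*y1-x1*y0)^2) :
    4*a^2*b^2*(a^2*(x1*y2-x2*y1)^2 + b^2*(x0*y2-x2*y0)^2 - (x0*y1-x1*y0)^2)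
      * ((x0^2+x1^2+x2^2)*(y0^2+y1^2+y2^2))
    < ((b^2+1)*(a^2*((x1*y2-x2*y1)^2+(x0*y2-x2*y0)^2+(x0*y1-x1*y0)^2)
        + (a^2*(x1*y2-x2*y1)^2 + b^2*(x0*y2-x2*y0)^2 - (x0*y1-x1*y0)^2)))^2 := by
  have ha : 0 < a := hb.trans hab
  subst hx0 hx1 hy0 hy1
  have E : a^2*((b*β₁*x2)*y2-x2*(b*β₂*y2))^2 + b^2*((a*α₁*x2)*y2-x2*(a*α₂*y2))^2
      - ((a*α₁*x2)*(b*β₂*y2)-(b*β₁*x2)*(a*α₂*y2))^2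
      = a^2*b^2*(x2*y2)^2*(1-(α₁*α₂+β₁*β₂))^2 := by
    linear_combination (a^2*b^2*x2^2*y2^2*(1-α₂^2-β₂^2)) * h1
  rw [E] at hC2 ⊢
  have hu0 : 0 ≤ 1 - (α₁*α₂ + β₁*β₂) := by
    nlinarith [sq_nonneg (α₁-α₂), sq_nonneg (β₁-β₂)]
  have hu : 0 < 1 - (α₁*α₂ + β₁*β₂) := by
    rcases hu0.lt_or_eq with h | h
    · exact h
    · rw [← h] at hC2; simp at hC2
  have key := sqIneq' a b α₁ β₁ α₂ β₂ hab hb h1 h2 hu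
  have hW : (0:ℝ) < a^4*(x2^2*y2^2)^2 := by positivity
  have key2 := (mul_lt_mul_iff_right₀ hW).mpr key
  linarith [key2]

/-- If an oriented line meets the elliptic cone at `p₁` and `p₂` and the first integrals have
values `c₁ > 0`, `c₂ > 0`, then the angle `∠ p₁ O p₂` is greater than
`arcsin (2ab√(c₁c₂) / (a²(b²+1)c₁ + (b²+1)c₂))`. -/
theorem stmt_1 (a b c₁ c₂ : ℝ) (hab : b < a) (hb : 0 < b) (hc₁ : 0 < c₁) (hc₂ : 0 < c₂)
    (p₁ p₂ : EuclideanSpace ℝ (Fin 3)) (h₁ : p₁ ∈ Ke a b) (h₂ : p₂ ∈ Ke a b) (hne : p₁ ≠ p₂)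
    (v : EuclideanSpace ℝ (Fin 3)) (hv : v = ‖p₂ - p₁‖⁻¹ • (p₂ - p₁))
    (hI1 : I1 p₂ v = c₁) (hI2 : I2 a b p₂ v = c₂) :
    Real.arcsin (2 * a * b * Real.sqrt (c₁ * c₂) /
        (a ^ 2 * (b ^ 2 + 1) * c₁ + (b ^ 2 + 1) * c₂)) <
      InnerProductGeometry.angle p₁ p₂ := by
  have ha : 0 < a := hb.trans hab
  obtain ⟨hx, hx2⟩ := h₁
  obtain ⟨hy, hy2⟩ := h₂
  have hd : (0:ℝ) < ‖p₂ - p₁‖ := by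
    rw [norm_pos_iff, sub_ne_zero]; exact hne.symm
  set d := ‖p₂ - p₁‖ with hd_def
  have hvi : ∀ i, v i = d⁻¹ * (p₂ i - p₁ i) := by intro i; rw [hv]; rfl
  set x0 := p₁ 0; set x1 := p₁ 1; set x2 := p₁ 2
  set y0 := p₂ 0; set y1 := p₂ 1; set y2 := p₂ 2
  have hdne : d ≠ 0 := ne_of_gt hd
  -- coordinate values of the invariants
  have hc1d : c₁ * d^2 = (x1*y2-x2*y1)^2 + (x0*y2-x2*y0)^2 + (x0*y1-x1*y0)^2 := by
    rw [← hI1]; unfold I1 m12 m13 m23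
    rw [hvi 0, hvi 1, hvi 2]
    field_simp
    ring
  have hc2d : c₂ * d^2 = a^2*(x1*y2-x2*y1)^2 + b^2*(x0*y2-x2*y0)^2 - (x0*y1-x1*y0)^2 := by
    rw [← hI2]; unfold I2 m12 m13 m23
    rw [hvi 0, hvi 1, hvi 2]
    field_simp
    ring
  -- parametrization
  have hx2ne : x2 ≠ 0 := ne_of_gt hx2
  have hy2ne : y2 ≠ 0 := ne_of_gt hy2
  have hane : a ≠ 0 := ne_of_gt ha
  have hbne : b ≠ 0 := ne_of_gt hb
  have hx0' : x0 = a * (x0/(a*x2)) * x2 := by field_simp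
  have hx1' : x1 = b * (x1/(b*x2)) * x2 := by field_simp
  have hy0' : y0 = a * (y0/(a*y2)) * y2 := by field_simp
  have hy1' : y1 = b * (y1/(b*y2)) * y2 := by field_simp
  have hxc : b^2*x0^2 + a^2*x1^2 = a^2*b^2*x2^2 := by
    field_simp at hx; linarith
  have hyc : b^2*y0^2 + a^2*y1^2 = a^2*b^2*y2^2 := by
    field_simp at hy; linarith
  have h1 : (x0/(a*x2))^2 + (x1/(b*x2))^2 = 1 := by
    field_simp
    linear_combination hxc
  have h2 : (y0/(a*y2))^2 + (y1/(b*y2))^2 = 1 := by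
    field_simp
    linear_combination hyc
  have hC2pos : 0 < a^2*(x1*y2-x2*y1)^2 + b^2*(x0*y2-x2*y0)^2 - (x0*y1-x1*y0)^2 := by
    rw [← hc2d]; positivity
  have CI := coordIneq' a b x0 x1 x2 y0 y1 y2 (x0/(a*x2)) (x1/(b*x2)) (y0/(a*y2)) (y1/(b*y2))
    hab hb hx0' hx1' hy0' hy1' h1 h2 hx2 hy2 hC2pos
  -- norms and inner products
  have hinner : ∀ (w z : EuclideanSpace ℝ (Fin 3)),
      ⟪w, z⟫ = w 0 * z 0 + w 1 * z 1 + w 2 * z 2 := by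
    intro w z
    simp [PiLp.inner_apply, RCLike.inner_apply, starRingEnd_apply, Fin.sum_univ_three]
    ring
  have hp1ne : p₁ ≠ 0 := by intro h0; rw [show x2 = p₁ 2 from rfl, h0] at hx2; simp at hx2
  have hp2ne : p₂ ≠ 0 := by intro h0; rw [show y2 = p₂ 2 from rfl, h0] at hy2; simp at hy2
  have hN1 : 0 < ‖p₁‖ := norm_pos_iff.mpr hp1ne
  have hN2 : 0 < ‖p₂‖ := norm_pos_iff.mpr hp2ne
  have hn1 : ‖p₁‖^2 = x0^2 + x1^2 + x2^2 := by
    rw [← real_inner_self_eq_norm_sq, hinner]; ring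
  have hn2 : ‖p₂‖^2 = y0^2 + y1^2 + y2^2 := by
    rw [← real_inner_self_eq_norm_sq, hinner]; ring
  set N := ‖p₁‖ * ‖p₂‖ with hN_def
  have hNpos : 0 < N := mul_pos hN1 hN2
  -- Lagrange identity
  have hQ : ⟪p₁, p₁⟫ * ⟪p₂, p₂⟫ - ⟪p₁, p₂⟫ * ⟪p₁, p₂⟫
      = (x1*y2-x2*y1)^2 + (x0*y2-x2*y0)^2 + (x0*y1-x1*y0)^2 := by
    rw [hinner, hinner, hinner]; ring
  set C1 := (x1*y2-x2*y1)^2 + (x0*y2-x2*y0)^2 + (x0*y1-x1*y0)^2 with hC1_def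
  set C2 := a^2*(x1*y2-x2*y1)^2 + b^2*(x0*y2-x2*y0)^2 - (x0*y1-x1*y0)^2 with hC2_def
  have hC1pos : 0 < C1 := by rw [← hc1d]; positivity
  set Dden := a ^ 2 * (b ^ 2 + 1) * c₁ + (b ^ 2 + 1) * c₂ with hDden_def
  have hDpos : 0 < Dden := by positivity
  set B := 2 * a * b * Real.sqrt (c₁ * c₂) / Dden with hB_def
  have hBpos : 0 ≤ B := by positivity
  -- main inequality : B * N < sqrt C1
  have hT4 : 4*a^2*b^2*C1*C2*N^2 < C1*((b^2+1)*(a^2*C1+C2))^2 := by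
    have := (mul_lt_mul_iff_right₀ hC1pos).mpr CI
    calc 4*a^2*b^2*C1*C2*N^2
        = C1 * (4*a^2*b^2*C2*((x0^2+x1^2+x2^2)*(y0^2+y1^2+y2^2))) := by
          rw [hN_def, mul_pow, hn1, hn2]; ring
      _ < C1 * ((b^2+1)*(a^2*C1+C2))^2 := by
          rw [hC1_def, hC2_def]; exact this
  have hT : 4*a^2*b^2*(c₁*c₂)*N^2 < c₁*d^2*Dden^2 := by
    have hd4 : (0:ℝ) < (d^2)^2 := by positivity
    have e1 : 4*a^2*b^2*(c₁*c₂)*N^2*(d^2)^2 = 4*a^2*b^2*C1*C2*N^2 := by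
      linear_combination (4*a^2*b^2*(c₂*d^2)*N^2)*hc1d + (4*a^2*b^2*C1*N^2)*hc2d
    have e2 : c₁*d^2*Dden^2*(d^2)^2 = C1*((b^2+1)*(a^2*C1+C2))^2 := by
      linear_combination (Dden^2*d^4 + C1*(b^2+1)*a^2*(Dden*d^2+(b^2+1)*(a^2*C1+C2)))*hc1d
        + (C1*(b^2+1)*(Dden*d^2+(b^2+1)*(a^2*C1+C2)))*hc2d
    have : 4*a^2*b^2*(c₁*c₂)*N^2*(d^2)^2 < c₁*d^2*Dden^2*(d^2)^2 := by
      rw [e1, e2]; exact hT4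
    exact lt_of_mul_lt_mul_right this hd4.le
  have hBN : B * N < Real.sqrt C1 := by
    rw [show B * N = B * N from rfl]
    have hBN0 : 0 ≤ B * N := mul_nonneg hBpos hNpos.le
    rw [Real.lt_sqrt hBN0]
    have hBsq : (B*N)^2 = 4*a^2*b^2*(c₁*c₂)*N^2 / Dden^2 := by
      rw [hB_def, mul_pow, div_pow, mul_pow, mul_pow, mul_pow,
        Real.sq_sqrt (by positivity : (0:ℝ) ≤ c₁*c₂)]
      ring
    rw [hBsq, div_lt_iff₀ (by positivity : (0:ℝ) < Dden^2)]
    calc 4*a^2*b^2*(c₁*c₂)*N^2 < c₁*d^2*Dden^2 := hT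
      _ = C1 * Dden^2 := by rw [hc1d]
  -- from B*N < sqrt C1 to B < sin angle
  have hsinN := InnerProductGeometry.sin_angle_mul_norm_mul_norm p₁ p₂
  rw [hQ] at hsinN
  have hBsin : B < Real.sin (InnerProductGeometry.angle p₁ p₂) := by
    have : B * N < Real.sin (InnerProductGeometry.angle p₁ p₂) * N := by
      rw [hN_def]; rw [hN_def] at hBN; rw [hsinN]; exact hBN
    exact lt_of_mul_lt_mul_right this hNpos.le
  -- conclude via arcsin
  have hθ0 := InnerProductGeometry.angle_nonneg p₁ p₂
  have hθπ := InnerProductGeometry.angle_le_pi p₁ p₂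
  have harc : Real.arcsin B < Real.arcsin (Real.sin (InnerProductGeometry.angle p₁ p₂)) := by
    apply Real.strictMonoOn_arcsin
    · constructor
      · linarith
      · exact le_trans hBsin.le (Real.sin_le_one _)
    · exact ⟨Real.neg_one_le_sin _, Real.sin_le_one _⟩
    · exact hBsin
  have harc2 : Real.arcsin (Real.sin (InnerProductGeometry.angle p₁ p₂))
      ≤ InnerProductGeometry.angle p₁ p₂ := by
    rcases le_or_gt (InnerProductGeometry.angle p₁ p₂) (π/2) with h | h
    · rw [Real.arcsin_sin (by linarith [Real.pi_pos]) h]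
    · exact le_trans (Real.arcsin_le_pi_div_two _) h.le
  calc Real.arcsin (2 * a * b * Real.sqrt (c₁ * c₂) / Dden) = Real.arcsin B := by rw [hB_def]
    _ < _ := lt_of_lt_of_le harc harc2
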